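/- As λ → 0+, Z(λ)·s·λ^{1/s}/Γ(1/s) → 1, where Z(λ) = ∑_{i=1}^∞ exp(-λ i^s) and s > 0 is fixed. -/

import Mathlib

open Filter MeasureTheory Set Real

private lemma pfa_anti {l s : ℝ} (hl : 0 < l) (hs : 0 < s) :
    AntitoneOn (fun x : ℝ => Real.exp (-l * x ^ s)) (Set.Ici 0) := by
  intro x hx y hy hxy
  simp only
  apply Real.exp_le_exp.2
  have h : x ^ s ≤ y ^ s := Real.rpow_le_rpow hx hxy hs.le
  nlinarith

private lemma pfa_integrable {l s : ℝ} (hl : 0 < l) (hs : 0 < s) :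
    IntegrableOn (fun x : ℝ => Real.exp (-l * x ^ s)) (Set.Ioi 0) := by
  by_contra h
  have hI := integral_exp_neg_mul_rpow hs hl
  rw [MeasureTheory.integral_undef h] at hI
  have h1 : 0 < l ^ (-1 / s) * Real.Gamma (1 / s + 1) := by
    have := Real.Gamma_pos_of_pos (show (0:ℝ) < 1 / s + 1 by positivity)
    positivity
  rw [← hI] at h1
  exact lt_irrefl 0 h1

private lemma pfa_partial_le {l s : ℝ} (hl : 0 < l) (hs : 0 < s) (n : ℕ) :
    ∑ i ∈ Finset.range n, Real.exp (-l * ((i : ℝ) + 1) ^ s)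
      ≤ ∫ x in Set.Ioi (0:ℝ), Real.exp (-l * x ^ s) := by
  have hanti : AntitoneOn (fun x : ℝ => Real.exp (-l * x ^ s))
      (Set.Icc (0:ℝ) (0 + (n:ℕ))) :=
    (pfa_anti hl hs).mono (fun x hx => hx.1)
  have h1 := hanti.sum_le_integral
  have heq : ∑ i ∈ Finset.range n, Real.exp (-l * ((0:ℝ) + ((i + 1 : ℕ) : ℝ)) ^ s)
      = ∑ i ∈ Finset.range n, Real.exp (-l * ((i : ℝ) + 1) ^ s) := by
    refine Finset.sum_congr rfl fun i _ => ?_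
    push_cast
    ring_nf
  rw [heq] at h1
  refine h1.trans ?_
  rw [intervalIntegral.integral_of_le (by positivity : (0:ℝ) ≤ 0 + (n:ℕ))]
  refine setIntegral_mono_set (pfa_integrable hl hs) ?_ ?_
  · filter_upwards with x using Real.exp_nonneg _
  · filter_upwards with x hx using hx.1

private lemma pfa_summable {l s : ℝ} (hl : 0 < l) (hs : 0 < s) :
    Summable (fun i : ℕ => Real.exp (-l * ((i : ℝ) + 1) ^ s)) :=
  summable_of_sum_range_le (fun _ => Real.exp_nonneg _) (pfa_partial_le hl hs)

private lemma pfa_tsum_le {l s : ℝ} (hl : 0 < l) (hs : 0 < s) :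
    (∑' i : ℕ, Real.exp (-l * ((i : ℝ) + 1) ^ s))
      ≤ ∫ x in Set.Ioi (0:ℝ), Real.exp (-l * x ^ s) :=
  Real.tsum_le_of_sum_range_le (fun _ => Real.exp_nonneg _) (pfa_partial_le hl hs)

private lemma pfa_le_tsum {l s : ℝ} (hl : 0 < l) (hs : 0 < s) :
    (∫ x in Set.Ioi (0:ℝ), Real.exp (-l * x ^ s)) - 1
      ≤ ∑' i : ℕ, Real.exp (-l * ((i : ℝ) + 1) ^ s) := by
  set f : ℝ → ℝ := fun x => Real.exp (-l * x ^ s) with hf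
  have hint : IntegrableOn f (Set.Ioi 0) := pfa_integrable hl hs
  have hint1 : IntegrableOn f (Set.Ioi 1) :=
    hint.mono_set (Set.Ioi_subset_Ioi zero_le_one)
  have hsplit : (∫ x in Set.Ioi (0:ℝ), f x)
      = (∫ x in Set.Ioc (0:ℝ) 1, f x) + ∫ x in Set.Ioi (1:ℝ), f x := by
    rw [← setIntegral_union (Set.Ioc_disjoint_Ioi le_rfl) measurableSet_Ioi
      (hint.mono_set Set.Ioc_subset_Ioi_self) hint1,
      Set.Ioc_union_Ioi_eq_Ioi zero_le_one]
  have hb1 : (∫ x in Set.Ioc (0:ℝ) 1, f x) ≤ 1 := by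
    have : (∫ x in Set.Ioc (0:ℝ) 1, f x) ≤ ∫ _ in Set.Ioc (0:ℝ) 1, (1:ℝ) := by
      refine setIntegral_mono_on (hint.mono_set Set.Ioc_subset_Ioi_self)
        (integrableOn_const (by simp)) measurableSet_Ioc fun x hx => ?_
      simp only [hf]
      rw [← Real.exp_zero]
      apply Real.exp_le_exp.2
      have : 0 ≤ x ^ s := Real.rpow_nonneg hx.1.le s
      nlinarith
    simpa using this
  have hb2 : (∫ x in Set.Ioi (1:ℝ), f x)
      ≤ ∑' i : ℕ, Real.exp (-l * ((i : ℝ) + 1) ^ s) := by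
    have htend : Tendsto (fun n : ℕ => ∫ x in (1:ℝ)..(n:ℝ), f x) atTop
        (nhds (∫ x in Set.Ioi (1:ℝ), f x)) :=
      intervalIntegral_tendsto_integral_Ioi 1 hint1 tendsto_natCast_atTop_atTop
    refine le_of_tendsto htend (eventually_atTop.2 ⟨1, fun n hn => ?_⟩)
    have hanti : AntitoneOn f (Set.Icc ((1:ℕ):ℝ) ((n:ℕ):ℝ)) :=
      (pfa_anti hl hs).mono (fun x hx => le_trans (by norm_num) hx.1)
    have h1 := AntitoneOn.integral_le_sum_Ico hn hanti
    rw [Nat.cast_one] at h1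
    refine h1.trans ?_
    rw [Finset.sum_Ico_eq_sum_range]
    have heq : ∀ j ∈ Finset.range (n - 1), f ((1 + j : ℕ) : ℝ)
        = Real.exp (-l * ((j : ℝ) + 1) ^ s) := by
      intro j _
      simp only [hf]
      push_cast
      ring_nf
    rw [Finset.sum_congr rfl heq]
    exact Summable.sum_le_tsum (Finset.range (n - 1)) (fun _ _ => Real.exp_nonneg _)
      (pfa_summable hl hs)
  linarith

/-- `Z(λ)·s·λ^{1/s}/Γ(1/s) → 1` as `λ → 0⁺`, where `Z(λ) = ∑_{i≥1} exp(-λ i^s)`. -/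
theorem partition_function_asymptotic (s : ℝ) (hs : 0 < s) :
    Tendsto (fun l : ℝ =>
        (∑' i : ℕ, Real.exp (-l * ((i : ℝ) + 1) ^ s)) * s * l ^ (1 / s) / Real.Gamma (1 / s))
      (nhdsWithin 0 (Set.Ioi 0)) (nhds 1) := by
  have hΓ : 0 < Real.Gamma (1 / s) := Real.Gamma_pos_of_pos (by positivity)
  have hlow : Tendsto (fun l : ℝ => 1 - s * l ^ (1 / s) / Real.Gamma (1 / s))
      (nhdsWithin 0 (Set.Ioi 0)) (nhds 1) := by
    have hc : Tendsto (fun l : ℝ => l ^ (1 / s)) (nhds 0) (nhds 0) := by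
      have := (Real.continuousAt_rpow_const 0 (1 / s) (Or.inr (by positivity))).tendsto
      rwa [Real.zero_rpow (by positivity : (1:ℝ)/s ≠ 0)] at this
    have h2 : Tendsto (fun l : ℝ => s * l ^ (1 / s) / Real.Gamma (1 / s))
        (nhdsWithin 0 (Set.Ioi 0)) (nhds (s * 0 / Real.Gamma (1 / s))) :=
      ((hc.mono_left nhdsWithin_le_nhds).const_mul s).div_const _
    have h3 := (tendsto_const_nhds (x := (1:ℝ))).sub h2
    simpa using h3
  refine tendsto_of_tendsto_of_tendsto_of_le_of_le' hlow tendsto_const_nhds ?_ ?_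
  · filter_upwards [self_mem_nhdsWithin] with l hl
    have hl : 0 < l := hl
    have hkey : (∫ x in Set.Ioi (0:ℝ), Real.exp (-l * x ^ s))
        * (s * l ^ (1 / s) / Real.Gamma (1 / s)) = 1 := by
      rw [integral_exp_neg_mul_rpow hs hl,
        Real.Gamma_add_one (by positivity : (1:ℝ)/s ≠ 0), neg_div,
        Real.rpow_neg hl.le]
      have hlp : l ^ (1 / s) ≠ 0 := by positivity
      field_simp
    have hle := pfa_le_tsum hl hs
    have hc : (0:ℝ) ≤ s * l ^ (1 / s) / Real.Gamma (1 / s) := by positivity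
    have h2 := mul_le_mul_of_nonneg_right hle hc
    calc 1 - s * l ^ (1 / s) / Real.Gamma (1 / s)
        = ((∫ x in Set.Ioi (0:ℝ), Real.exp (-l * x ^ s)) - 1)
            * (s * l ^ (1 / s) / Real.Gamma (1 / s)) := by
          rw [sub_mul, hkey, one_mul]
      _ ≤ (∑' i : ℕ, Real.exp (-l * ((i : ℝ) + 1) ^ s))
            * (s * l ^ (1 / s) / Real.Gamma (1 / s)) := h2
      _ = (∑' i : ℕ, Real.exp (-l * ((i : ℝ) + 1) ^ s)) * s * l ^ (1 / s)
            / Real.Gamma (1 / s) := by ring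
  · filter_upwards [self_mem_nhdsWithin] with l hl
    have hl : 0 < l := hl
    have hkey : (∫ x in Set.Ioi (0:ℝ), Real.exp (-l * x ^ s))
        * (s * l ^ (1 / s) / Real.Gamma (1 / s)) = 1 := by
      rw [integral_exp_neg_mul_rpow hs hl,
        Real.Gamma_add_one (by positivity : (1:ℝ)/s ≠ 0), neg_div,
        Real.rpow_neg hl.le]
      have hlp : l ^ (1 / s) ≠ 0 := by positivity
      field_simp
    have hle := pfa_tsum_le hl hs
    have hc : (0:ℝ) ≤ s * l ^ (1 / s) / Real.Gamma (1 / s) := by positivity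
    have h2 := mul_le_mul_of_nonneg_right hle hc
    calc (∑' i : ℕ, Real.exp (-l * ((i : ℝ) + 1) ^ s)) * s * l ^ (1 / s)
            / Real.Gamma (1 / s)
        = (∑' i : ℕ, Real.exp (-l * ((i : ℝ) + 1) ^ s))
            * (s * l ^ (1 / s) / Real.Gamma (1 / s)) := by ring
      _ ≤ (∫ x in Set.Ioi (0:ℝ), Real.exp (-l * x ^ s))
            * (s * l ^ (1 / s) / Real.Gamma (1 / s)) := h2
      _ = 1 := hkey
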